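/- For a two-qubit X state ρ_X with diagonal entries a,b,c,d and off-diagonal entries e (corners) and f (center), satisfying |e| ≤ √(ad) and |f| ≤ √(bc), the concurrence equals 2·max{0, |e| − √(bc), |f| − √(ad)}. -/

import Mathlib

open Matrix Polynomial ComplexOrder

/-- A two-qubit X state (as a 4×4 complex matrix) with diagonal `a,b,c,d`,
corner off-diagonal entries `e` and center off-diagonal entries `f` (all real). -/
noncomputable def Xmat (a b c d e f : ℝ) : Matrix (Fin 4) (Fin 4) ℂ :=
  !![(a : ℂ), 0, 0, (e : ℂ);
     0, (b : ℂ), (f : ℂ), 0;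
     0, (f : ℂ), (c : ℂ), 0;
     (e : ℂ), 0, 0, (d : ℂ)]

/-- `σ_y ⊗ σ_y` as a 4×4 matrix. -/
noncomputable def YY : Matrix (Fin 4) (Fin 4) ℂ :=
  !![0, 0, 0, -1;
     0, 0, 1, 0;
     0, 1, 0, 0;
     -1, 0, 0, 0]

/-- The matrix `ρ (σ_y⊗σ_y) ρ* (σ_y⊗σ_y)` whose eigenvalues are the squares of the
`λᵢ` appearing in the definition of concurrence. -/
noncomputable def spinFlipProd (ρ : Matrix (Fin 4) (Fin 4) ℂ) : Matrix (Fin 4) (Fin 4) ℂ :=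
  ρ * YY * ρ.map (starRingEnd ℂ) * YY

theorem mul_fin_four' {α : Type*} [NonUnitalNonAssocSemiring α]
    (a₁₁ a₁₂ a₁₃ a₁₄ a₂₁ a₂₂ a₂₃ a₂₄ a₃₁ a₃₂ a₃₃ a₃₄ a₄₁ a₄₂ a₄₃ a₄₄
     b₁₁ b₁₂ b₁₃ b₁₄ b₂₁ b₂₂ b₂₃ b₂₄ b₃₁ b₃₂ b₃₃ b₃₄ b₄₁ b₄₂ b₄₃ b₄₄ : α) :
    !![a₁₁, a₁₂, a₁₃, a₁₄;
       a₂₁, a₂₂, a₂₃, a₂₄;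
       a₃₁, a₃₂, a₃₃, a₃₄;
       a₄₁, a₄₂, a₄₃, a₄₄] * !![b₁₁, b₁₂, b₁₃, b₁₄;
                                b₂₁, b₂₂, b₂₃, b₂₄;
                                b₃₁, b₃₂, b₃₃, b₃₄;
                                b₄₁, b₄₂, b₄₃, b₄₄] =
    !![a₁₁*b₁₁ + a₁₂*b₂₁ + a₁₃*b₃₁ + a₁₄*b₄₁, a₁₁*b₁₂ + a₁₂*b₂₂ + a₁₃*b₃₂ + a₁₄*b₄₂,
       a₁₁*b₁₃ + a₁₂*b₂₃ + a₁₃*b₃₃ + a₁₄*b₄₃, a₁₁*b₁₄ + a₁₂*b₂₄ + a₁₃*b₃₄ + a₁₄*b₄₄;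
       a₂₁*b₁₁ + a₂₂*b₂₁ + a₂₃*b₃₁ + a₂₄*b₄₁, a₂₁*b₁₂ + a₂₂*b₂₂ + a₂₃*b₃₂ + a₂₄*b₄₂,
       a₂₁*b₁₃ + a₂₂*b₂₃ + a₂₃*b₃₃ + a₂₄*b₄₃, a₂₁*b₁₄ + a₂₂*b₂₄ + a₂₃*b₃₄ + a₂₄*b₄₄;
       a₃₁*b₁₁ + a₃₂*b₂₁ + a₃₃*b₃₁ + a₃₄*b₄₁, a₃₁*b₁₂ + a₃₂*b₂₂ + a₃₃*b₃₂ + a₃₄*b₄₂,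
       a₃₁*b₁₃ + a₃₂*b₂₃ + a₃₃*b₃₃ + a₃₄*b₄₃, a₃₁*b₁₄ + a₃₂*b₂₄ + a₃₃*b₃₄ + a₃₄*b₄₄;
       a₄₁*b₁₁ + a₄₂*b₂₁ + a₄₃*b₃₁ + a₄₄*b₄₁, a₄₁*b₁₂ + a₄₂*b₂₂ + a₄₃*b₃₂ + a₄₄*b₄₂,
       a₄₁*b₁₃ + a₄₂*b₂₃ + a₄₃*b₃₃ + a₄₄*b₄₃, a₄₁*b₁₄ + a₄₂*b₂₄ + a₄₃*b₃₄ + a₄₄*b₄₄] := by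
  ext i j
  fin_cases i <;> fin_cases j
    <;> simp [Matrix.mul_apply, dotProduct, Fin.sum_univ_succ, ← add_assoc]

theorem spinFlipProd_Xmat (a b c d e f : ℝ) :
    spinFlipProd (Xmat a b c d e f) =
    !![(a*d+e^2 : ℂ), 0, 0, 2*a*e;
       0, (b*c+f^2 : ℂ), 2*b*f, 0;
       0, 2*c*f, (b*c+f^2 : ℂ), 0;
       2*d*e, 0, 0, (a*d+e^2 : ℂ)] := by
  have hmap : (Xmat a b c d e f).map (starRingEnd ℂ) = Xmat a b c d e f := by
    ext i j
    fin_cases i <;> fin_cases j <;> simp [Xmat, Matrix.map_apply, Complex.conj_ofReal]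
  rw [spinFlipProd, hmap, Xmat, YY, mul_fin_four', mul_fin_four', mul_fin_four']
  norm_num
  and_intros <;> first | trivial | ring

theorem det_fin_four' {R : Type*} [CommRing R] (A : Matrix (Fin 4) (Fin 4) R) :
    A.det =
      A 0 0 * (A 1 1 * (A 2 2 * A 3 3 - A 2 3 * A 3 2)
             - A 1 2 * (A 2 1 * A 3 3 - A 2 3 * A 3 1)
             + A 1 3 * (A 2 1 * A 3 2 - A 2 2 * A 3 1))
    - A 0 1 * (A 1 0 * (A 2 2 * A 3 3 - A 2 3 * A 3 2)
             - A 1 2 * (A 2 0 * A 3 3 - A 2 3 * A 3 0)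
             + A 1 3 * (A 2 0 * A 3 2 - A 2 2 * A 3 0))
    + A 0 2 * (A 1 0 * (A 2 1 * A 3 3 - A 2 3 * A 3 1)
             - A 1 1 * (A 2 0 * A 3 3 - A 2 3 * A 3 0)
             + A 1 3 * (A 2 0 * A 3 1 - A 2 1 * A 3 0))
    - A 0 3 * (A 1 0 * (A 2 1 * A 3 2 - A 2 2 * A 3 1)
             - A 1 1 * (A 2 0 * A 3 2 - A 2 2 * A 3 0)
             + A 1 2 * (A 2 0 * A 3 1 - A 2 1 * A 3 0)) := by
  rw [Matrix.det_succ_row_zero]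
  simp [Fin.sum_univ_succ, Matrix.det_fin_three, Matrix.submatrix,
    show (Fin.succ 2 : Fin 4) = 3 from rfl,
    show Fin.succAbove (2 : Fin 4) (2 : Fin 3) = 3 by decide,
    show Fin.succAbove (1 : Fin 4) (2 : Fin 3) = 3 by decide,
    show Fin.succAbove (3 : Fin 4) (2 : Fin 3) = 2 by decide,
    show (Fin.castSucc 2 : Fin 4) = 2 from rfl]
  ring

set_option maxHeartbeats 1000000 in
theorem charpoly_eq' (a b c d e f : ℝ) :
    (spinFlipProd (Xmat a b c d e f)).charpoly =
      ((X^2 - C ((2:ℂ)*(a*d+e^2))*X + C (((a*d-e^2 : ℝ):ℂ)^2)) *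
       (X^2 - C ((2:ℂ)*(b*c+f^2))*X + C (((b*c-f^2 : ℝ):ℂ)^2))) := by
  rw [spinFlipProd_Xmat, Matrix.charpoly, det_fin_four']
  simp only [charmatrix_apply, Matrix.diagonal_apply, Matrix.map_apply]
  norm_num
  push_cast
  simp only [show (C (2:ℂ)) = 2 from map_ofNat _ 2]
  simp only [map_zero, map_add, map_mul, map_pow, map_ofNat]
  ring

theorem quad_eq (R U : ℂ) :
    (X - C ((R+U)^2)) * (X - C ((R-U)^2))
      = X^2 - C (2*(R^2+U^2))*X + C ((R^2-U^2)^2) := by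
  simp only [map_add, map_sub, _root_.map_mul, map_pow, map_ofNat, C_add, C_mul]
  ring

theorem concurrence_Xstate (a b c d e f : ℝ)
    (ha : 0 ≤ a) (hb : 0 ≤ b) (hc : 0 ≤ c) (hd : 0 ≤ d)
    (hρ : (Xmat a b c d e f).PosSemidef) (htr : (Xmat a b c d e f).trace = 1)
    (he : |e| ≤ Real.sqrt (a * d)) (hf : |f| ≤ Real.sqrt (b * c))
    (lam : Fin 4 → ℝ) (hlam_nn : ∀ i, 0 ≤ lam i) (hlam_dec : Antitone lam)
    (hchar : (spinFlipProd (Xmat a b c d e f)).charpoly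
      = ∏ i : Fin 4, (X - C (((lam i : ℝ) : ℂ) ^ 2))) :
    max 0 (lam 0 - lam 1 - lam 2 - lam 3)
      = 2 * max 0 (max (|e| - Real.sqrt (b * c)) (|f| - Real.sqrt (a * d))) := by
  set r := Real.sqrt (a * d) with hr
  set t := Real.sqrt (b * c) with ht
  have hr0 : 0 ≤ r := Real.sqrt_nonneg _
  have ht0 : 0 ≤ t := Real.sqrt_nonneg _
  have hr2 : r ^ 2 = a * d := Real.sq_sqrt (mul_nonneg ha hd)
  have ht2 : t ^ 2 = b * c := Real.sq_sqrt (mul_nonneg hb hc)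
  -- the four candidate eigen-square-roots
  set s0 := r + |e| with hs0
  set s1 := r - |e| with hs1
  set s2 := t + |f| with hs2
  set s3 := t - |f| with hs3
  have hs0n : 0 ≤ s0 := by positivity
  have hs1n : 0 ≤ s1 := by simp [hs1]; linarith
  have hs2n : 0 ≤ s2 := by positivity
  have hs3n : 0 ≤ s3 := by simp [hs3]; linarith
  -- the characteristic polynomial factors through the sᵢ
  have hchar2 : (spinFlipProd (Xmat a b c d e f)).charpoly =
      (X - C ((s0:ℂ)^2)) * (X - C ((s1:ℂ)^2)) * ((X - C ((s2:ℂ)^2)) * (X - C ((s3:ℂ)^2))) := by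
    rw [charpoly_eq']
    have h1 : ((s0:ℂ)) = (r:ℂ) + ((|e|:ℝ):ℂ) := by push_cast [hs0]; ring
    have h2 : ((s1:ℂ)) = (r:ℂ) - ((|e|:ℝ):ℂ) := by push_cast [hs1]; ring
    have h3 : ((s2:ℂ)) = (t:ℂ) + ((|f|:ℝ):ℂ) := by push_cast [hs2]; ring
    have h4 : ((s3:ℂ)) = (t:ℂ) - ((|f|:ℝ):ℂ) := by push_cast [hs3]; ring
    rw [h1, h2, h3, h4, quad_eq, quad_eq]
    have he2 : ((|e|:ℝ):ℂ)^2 = ((e:ℝ):ℂ)^2 := by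
      norm_cast; rw [sq_abs]
    have hf2 : ((|f|:ℝ):ℂ)^2 = ((f:ℝ):ℂ)^2 := by
      norm_cast; rw [sq_abs]
    have hrc : ((r:ℝ):ℂ)^2 = ((a*d : ℝ):ℂ) := by norm_cast
    have htc : ((t:ℝ):ℂ)^2 = ((b*c : ℝ):ℂ) := by norm_cast
    rw [he2, hf2, hrc, htc]
    push_cast
    ring
  -- multiset of roots
  have hprod : (∏ i : Fin 4, (X - C (((lam i : ℝ) : ℂ) ^ 2)))
      = (X - C (((lam 0:ℝ):ℂ)^2)) * (X - C (((lam 1:ℝ):ℂ)^2)) *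
        ((X - C (((lam 2:ℝ):ℂ)^2)) * (X - C (((lam 3:ℝ):ℂ)^2))) := by
    rw [Fin.prod_univ_four]; ring
  have hpoly : ((({((lam 0:ℝ):ℂ)^2, ((lam 1:ℝ):ℂ)^2, ((lam 2:ℝ):ℂ)^2, ((lam 3:ℝ):ℂ)^2} : Multiset ℂ)).map
        (fun z => X - C z)).prod
      = ((({((s0:ℝ):ℂ)^2, ((s1:ℝ):ℂ)^2, ((s2:ℝ):ℂ)^2, ((s3:ℝ):ℂ)^2} : Multiset ℂ)).map
        (fun z => X - C z)).prod := by
    simp only [Multiset.insert_eq_cons, Multiset.map_cons, Multiset.map_singleton,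
      Multiset.prod_cons, Multiset.prod_singleton]
    rw [← mul_assoc, ← mul_assoc]
    calc _ = (X - C (((lam 0:ℝ):ℂ)^2)) * (X - C (((lam 1:ℝ):ℂ)^2)) *
        ((X - C (((lam 2:ℝ):ℂ)^2)) * (X - C (((lam 3:ℝ):ℂ)^2))) := by ring
      _ = (X - C ((s0:ℂ)^2)) * (X - C ((s1:ℂ)^2)) * ((X - C ((s2:ℂ)^2)) * (X - C ((s3:ℂ)^2))) := by
          rw [← hprod, ← hchar, hchar2]
      _ = _ := by ring
  have hroots : ({((lam 0:ℝ):ℂ)^2, ((lam 1:ℝ):ℂ)^2, ((lam 2:ℝ):ℂ)^2, ((lam 3:ℝ):ℂ)^2} : Multiset ℂ)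
      = ({((s0:ℝ):ℂ)^2, ((s1:ℝ):ℂ)^2, ((s2:ℝ):ℂ)^2, ((s3:ℝ):ℂ)^2} : Multiset ℂ) := by
    have := congrArg Polynomial.roots hpoly
    rwa [Polynomial.roots_multiset_prod_X_sub_C, Polynomial.roots_multiset_prod_X_sub_C] at this
  -- transfer to real multisets
  have hreal : ({(lam 0)^2, (lam 1)^2, (lam 2)^2, (lam 3)^2} : Multiset ℝ)
      = ({s0^2, s1^2, s2^2, s3^2} : Multiset ℝ) := by
    apply Multiset.map_injective (α := ℝ) (β := ℂ) Complex.ofReal_injective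
    simpa [Multiset.map_cons, Multiset.map_singleton, Complex.ofReal_pow] using hroots
  have hlamset : ({lam 0, lam 1, lam 2, lam 3} : Multiset ℝ)
      = ({s0, s1, s2, s3} : Multiset ℝ) := by
    have := congrArg (Multiset.map Real.sqrt) hreal
    simpa [Multiset.map_cons, Multiset.map_singleton,
      Real.sqrt_sq (hlam_nn 0), Real.sqrt_sq (hlam_nn 1), Real.sqrt_sq (hlam_nn 2),
      Real.sqrt_sq (hlam_nn 3), Real.sqrt_sq hs0n, Real.sqrt_sq hs1n,
      Real.sqrt_sq hs2n, Real.sqrt_sq hs3n] using this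
  -- lam 0 is the max
  have hmem : lam 0 ∈ ({s0, s1, s2, s3} : Multiset ℝ) := by
    rw [← hlamset]; simp
  have hs0mem : s0 ∈ ({lam 0, lam 1, lam 2, lam 3} : Multiset ℝ) := by
    rw [hlamset]; simp
  have hs2mem : s2 ∈ ({lam 0, lam 1, lam 2, lam 3} : Multiset ℝ) := by
    rw [hlamset]; simp
  have hlam0max : ∀ i : Fin 4, lam i ≤ lam 0 := fun i => hlam_dec (Fin.zero_le i)
  have hle1 : s0 ≤ lam 0 := by
    have h' : s0 = lam 0 ∨ s0 = lam 1 ∨ s0 = lam 2 ∨ s0 = lam 3 := by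
      simpa [Multiset.mem_cons, Multiset.mem_singleton] using hs0mem
    rcases h' with h|h|h|h <;> rw [h] <;> exact hlam0max _
  have hle2 : s2 ≤ lam 0 := by
    have h' : s2 = lam 0 ∨ s2 = lam 1 ∨ s2 = lam 2 ∨ s2 = lam 3 := by
      simpa [Multiset.mem_cons, Multiset.mem_singleton] using hs2mem
    rcases h' with h|h|h|h <;> rw [h] <;> exact hlam0max _
  have hub : lam 0 ≤ max s0 s2 := by
    have h' : lam 0 = s0 ∨ lam 0 = s1 ∨ lam 0 = s2 ∨ lam 0 = s3 := by
      simpa [Multiset.mem_cons, Multiset.mem_singleton] using hmem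
    rcases h' with h|h|h|h <;> rw [h] <;>
      [exact le_max_left _ _;
       exact le_trans (by simp [hs1, hs0]; linarith [abs_nonneg e]) (le_max_left _ _);
       exact le_max_right _ _;
       exact le_trans (by simp [hs3, hs2]; linarith [abs_nonneg f]) (le_max_right _ _)]
  have hlam0 : lam 0 = max s0 s2 := le_antisymm hub (max_le hle1 hle2)
  -- sums agree
  have hsum : lam 0 + lam 1 + lam 2 + lam 3 = s0 + s1 + s2 + s3 := by
    have := congrArg Multiset.sum hlamset
    simpa [add_assoc] using this
  -- finish by arithmetic
  have hdiff : lam 0 - lam 1 - lam 2 - lam 3 = 2 * max (|e| - t) (|f| - r) := by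
    have h1 : lam 0 - lam 1 - lam 2 - lam 3 = 2 * lam 0 - (lam 0 + lam 1 + lam 2 + lam 3) := by
      ring
    rw [h1, hsum, hlam0]
    rcases le_total s0 s2 with h|h
    · rw [max_eq_right h, max_eq_right (by simp [hs0, hs2] at h ⊢; linarith)]
      simp [hs0, hs1, hs2, hs3]; ring
    · rw [max_eq_left h, max_eq_left (by simp [hs0, hs2] at h ⊢; linarith)]
      simp [hs0, hs1, hs2, hs3]; ring
  rw [hdiff]
  rcases le_total (max (|e| - t) (|f| - r)) 0 with h|h
  · rw [max_eq_left (by linarith), max_eq_left h, mul_zero]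
  · rw [max_eq_right (by linarith), max_eq_right h]
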